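/- arXiv:0802.1036 — 2 statements merged into one kernel-verified Lean document; each statement's English description precedes it below -/
import Mathlib

section
/- Let C be a monoidal category and suppose given, for all objects V, U, V', U', an associative operation ⊛: Hom_C(V,U) × Hom_C(V',U') → Hom_C(V ⊗ V', U ⊗ U') such that (i) φ ⊛ ψ = (φ ⊗ ψ) ∘ (id_V ⊛ id_{V'}) for all φ: V → U, ψ: V' → U'; (ii) φ ⊛ ξ = φ ⊗ ξ and ξ ⊛ φ = ξ ⊗ φ whenever ξ has target the unit object 1; and (iii) I_{U,V} := id_U ⊛ id_V is invertible for all U, V. Then J_{U,V} := I_{U,V}^{-1} is a cocycle in C, i.e. satisfies the 2-cocycle equation a_{XYZ} J_{X⊗Y,Z} (J_{X,Y} ⊗ id_Z) = J_{X,Y⊗Z} (id_X ⊗ J_{Y,Z}) a_{XYZ} and the normalization J_{X,1} = id, J_{1,X} = id. -/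
open CategoryTheory MonoidalCategory

/-- Given an associative operation `⊛` on Hom-spaces of a monoidal category `C`
satisfying (i) `φ ⊛ ψ = (id ⊛ id) ≫ (φ ⊗ ψ)`, (ii) compatibility with morphisms into the unit
object, and (iii) invertibility of `I_{U,V} := id_U ⊛ id_V`, the inverses `J_{U,V} := I_{U,V}⁻¹`
form a cocycle in `C`: they satisfy the 2-cocycle equation and the normalization conditions. -/
theorem stmt4 {C : Type*} [Category C] [MonoidalCategory C]
    (star : ∀ {V U V' U' : C}, (V ⟶ U) → (V' ⟶ U') → (V ⊗ V' ⟶ U ⊗ U'))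
    -- associativity of ⊛ (under the associativity constraint)
    (hassoc : ∀ {V U V' U' V'' U'' : C} (φ : V ⟶ U) (ψ : V' ⟶ U') (χ : V'' ⟶ U''),
      star (star φ ψ) χ ≫ (α_ U U' U'').hom = (α_ V V' V'').hom ≫ star φ (star ψ χ))
    -- (i)
    (hi : ∀ {V U V' U' : C} (φ : V ⟶ U) (ψ : V' ⟶ U'),
      star φ ψ = star (𝟙 V) (𝟙 V') ≫ (φ ⊗ₘ ψ))
    -- (ii)
    (hii₁ : ∀ {V U V' : C} (φ : V ⟶ U) (ξ : V' ⟶ 𝟙_ C), star φ ξ = φ ⊗ₘ ξ)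
    (hii₂ : ∀ {V U V' : C} (φ : V ⟶ U) (ξ : V' ⟶ 𝟙_ C), star ξ φ = ξ ⊗ₘ φ)
    -- (iii)
    (hinv : ∀ U V : C, IsIso (star (𝟙 U) (𝟙 V))) :
    -- conclusion: J := I⁻¹ is a cocycle
    (∀ X Y Z : C,
      haveI := hinv X Y; haveI := hinv (X ⊗ Y) Z
      haveI := hinv Y Z; haveI := hinv X (Y ⊗ Z)
      (inv (star (𝟙 X) (𝟙 Y)) ▷ Z) ≫ inv (star (𝟙 (X ⊗ Y)) (𝟙 Z)) ≫ (α_ X Y Z).hom =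
        (α_ X Y Z).hom ≫ (X ◁ inv (star (𝟙 Y) (𝟙 Z))) ≫ inv (star (𝟙 X) (𝟙 (Y ⊗ Z))))
    ∧ (∀ X : C,
        haveI := hinv X (𝟙_ C)
        inv (star (𝟙 X) (𝟙 (𝟙_ C))) = 𝟙 (X ⊗ 𝟙_ C))
    ∧ (∀ X : C,
        haveI := hinv (𝟙_ C) X
        inv (star (𝟙 (𝟙_ C)) (𝟙 X)) = 𝟙 (𝟙_ C ⊗ X)) := by
  refine ⟨?_, ?_, ?_⟩
  · intro X Y Z
    haveI := hinv X Y; haveI := hinv (X ⊗ Y) Z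
    haveI := hinv Y Z; haveI := hinv X (Y ⊗ Z)
    have h := hassoc (𝟙 X) (𝟙 Y) (𝟙 Z)
    rw [hi (star (𝟙 X) (𝟙 Y)) (𝟙 Z), hi (𝟙 X) (star (𝟙 Y) (𝟙 Z)),
      tensorHom_id, id_tensorHom] at h
    rw [← cancel_epi (star (𝟙 (X ⊗ Y)) (𝟙 Z) ≫ (star (𝟙 X) (𝟙 Y) ▷ Z))]
    simp only [Category.assoc, ← comp_whiskerRight,
      IsIso.hom_inv_id, id_whiskerRight, Category.id_comp,
      IsIso.hom_inv_id_assoc]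
    rw [reassoc_of% h]
    simp [← MonoidalCategory.whiskerLeft_comp]
  · intro X
    haveI := hinv X (𝟙_ C)
    have : star (𝟙 X) (𝟙 (𝟙_ C)) = 𝟙 (X ⊗ 𝟙_ C) := by
      rw [hii₁]; simp
    exact IsIso.inv_eq_of_hom_inv_id (by rw [this]; simp)
  · intro X
    haveI := hinv (𝟙_ C) X
    have : star (𝟙 (𝟙_ C)) (𝟙 X) = 𝟙 (𝟙_ C ⊗ X) := by
      rw [hii₂]; simp
    exact IsIso.inv_eq_of_hom_inv_id (by rw [this]; simp)
end

section
/- Let C be a monoidal category, M a left module category over C with associativity isomorphisms m_{X,Y,M}: (X ⊗ Y) ⊗̄ M → X ⊗̄ (Y ⊗̄ M), and J a dynamical twist for the extension M ⋉ C, i.e. a family of isomorphisms J_{X,Y,M}: (X ⊗ Y) ⊗̄ M → (X ⊗ Y) ⊗̄ M satisfying the dynamical cocycle and normalization conditions and commuting with morphisms of C. Then M with the same action bifunctor and modified associativity isomorphisms m̂_{X,Y,M} := m_{X,Y,M} ∘ J^{-1}_{X,Y,M} is again a module category over C (the pentagon-type axiom (1) and triangle axiom (2) of module categories hold for m̂).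 -/
open CategoryTheory MonoidalCategory

/-- A left module category `(M, ⊗̄, m, l)` over a monoidal category `C`. -/
structure ModCategory (C : Type*) [Category C] [MonoidalCategory C]
    (M : Type*) [Category M] where
  actObj : C → M → M
  actHom : ∀ {X Y : C} {M₁ M₂ : M}, (X ⟶ Y) → (M₁ ⟶ M₂) → (actObj X M₁ ⟶ actObj Y M₂)
  actHom_id : ∀ (X : C) (M₁ : M), actHom (𝟙 X) (𝟙 M₁) = 𝟙 (actObj X M₁)
  actHom_comp : ∀ {X Y Z : C} {M₁ M₂ M₃ : M} (f : X ⟶ Y) (g : Y ⟶ Z) (u : M₁ ⟶ M₂) (v : M₂ ⟶ M₃),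
    actHom (f ≫ g) (u ≫ v) = actHom f u ≫ actHom g v
  assocIso : ∀ (X Y : C) (M₁ : M), actObj (X ⊗ Y) M₁ ≅ actObj X (actObj Y M₁)
  assocIso_natural : ∀ {X X' Y Y' : C} {M₁ M₂ : M} (f : X ⟶ X') (g : Y ⟶ Y') (u : M₁ ⟶ M₂),
    actHom (f ⊗ₘ g) u ≫ (assocIso X' Y' M₂).hom = (assocIso X Y M₁).hom ≫ actHom f (actHom g u)
  unitIso : ∀ M₁ : M, actObj (𝟙_ C) M₁ ≅ M₁
  unitIso_natural : ∀ {M₁ M₂ : M} (u : M₁ ⟶ M₂),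
    actHom (𝟙 (𝟙_ C)) u ≫ (unitIso M₂).hom = (unitIso M₁).hom ≫ u
  pentagon : ∀ (X Y Z : C) (M₁ : M),
    (assocIso (X ⊗ Y) Z M₁).hom ≫ (assocIso X Y (actObj Z M₁)).hom =
      actHom (α_ X Y Z).hom (𝟙 M₁) ≫ (assocIso X (Y ⊗ Z) M₁).hom ≫
        actHom (𝟙 X) (assocIso Y Z M₁).hom
  triangle : ∀ (X : C) (M₁ : M),
    (assocIso X (𝟙_ C) M₁).hom ≫ actHom (𝟙 X) (unitIso M₁).hom = actHom (ρ_ X).hom (𝟙 M₁)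

/-- A dynamical twist for the dynamical extension `M ⋉ C`: a family of isomorphisms
`J_{X,Y,M} : (X ⊗ Y) ⊗̄ M ≅ (X ⊗ Y) ⊗̄ M`, natural in `M`, satisfying the dynamical cocycle
condition, the normalization conditions, and commuting with the morphisms of `C`. -/
structure DynamicalTwist {C : Type*} [Category C] [MonoidalCategory C]
    {M : Type*} [Category M] (ρ : ModCategory C M) where
  J : ∀ (X Y : C) (M₁ : M), ρ.actObj (X ⊗ Y) M₁ ≅ ρ.actObj (X ⊗ Y) M₁
  natural : ∀ (X Y : C) {M₁ M₂ : M} (u : M₁ ⟶ M₂),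
    ρ.actHom (𝟙 (X ⊗ Y)) u ≫ (J X Y M₂).hom = (J X Y M₁).hom ≫ ρ.actHom (𝟙 (X ⊗ Y)) u
  cocycle : ∀ (X Y Z : C) (M₁ : M),
    (ρ.assocIso (X ⊗ Y) Z M₁).hom ≫ (J X Y (ρ.actObj Z M₁)).hom ≫
        (ρ.assocIso (X ⊗ Y) Z M₁).inv ≫ (J (X ⊗ Y) Z M₁).hom ≫
        ρ.actHom (α_ X Y Z).hom (𝟙 M₁) =
      ρ.actHom (α_ X Y Z).hom (𝟙 M₁) ≫ (ρ.assocIso X (Y ⊗ Z) M₁).hom ≫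
        ρ.actHom (𝟙 X) ((J Y Z M₁).hom) ≫ (ρ.assocIso X (Y ⊗ Z) M₁).inv ≫
        (J X (Y ⊗ Z) M₁).hom
  norm_right : ∀ (X : C) (M₁ : M),
    (J X (𝟙_ C) M₁).hom ≫ ρ.actHom (ρ_ X).hom (𝟙 M₁) = ρ.actHom (ρ_ X).hom (𝟙 M₁)
  norm_left : ∀ (X : C) (M₁ : M),
    (J (𝟙_ C) X M₁).hom ≫ ρ.actHom (λ_ X).hom (𝟙 M₁) = ρ.actHom (λ_ X).hom (𝟙 M₁)
  commutes : ∀ {X Y Z W : C} (f : X ⟶ Z) (g : Y ⟶ W) (M₁ : M),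
    ρ.actHom (f ⊗ₘ g) (𝟙 M₁) ≫ (J Z W M₁).hom = (J X Y M₁).hom ≫ ρ.actHom (f ⊗ₘ g) (𝟙 M₁)

/-- Auxiliary: the action of a pair of isomorphisms is an isomorphism. -/
def ModCategory.actIso {C : Type*} [Category C] [MonoidalCategory C] {M : Type*} [Category M]
    (ρ : ModCategory C M) {X Y : C} {M₁ M₂ : M} (f : X ≅ Y) (u : M₁ ≅ M₂) :
    ρ.actObj X M₁ ≅ ρ.actObj Y M₂ where
  hom := ρ.actHom f.hom u.hom
  inv := ρ.actHom f.inv u.inv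
  hom_inv_id := by rw [← ρ.actHom_comp, f.hom_inv_id, u.hom_inv_id, ρ.actHom_id]
  inv_hom_id := by rw [← ρ.actHom_comp, f.inv_hom_id, u.inv_hom_id, ρ.actHom_id]

/-- if `J` is a dynamical twist for `M ⋉ C`, then `M` with the same action and
the modified associativity isomorphisms `m̂_{X,Y,M} := m_{X,Y,M} ∘ J⁻¹_{X,Y,M}` is again a
module category over `C`: the pentagon-type axiom and the triangle axiom hold for `m̂`. -/
theorem stmt8 {C : Type*} [Category C] [MonoidalCategory C] {M : Type*} [Category M]
    (ρ : ModCategory C M) (𝒥 : DynamicalTwist ρ) :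
    (∀ (X Y Z : C) (M₁ : M),
      ((𝒥.J (X ⊗ Y) Z M₁).inv ≫ (ρ.assocIso (X ⊗ Y) Z M₁).hom) ≫
          ((𝒥.J X Y (ρ.actObj Z M₁)).inv ≫ (ρ.assocIso X Y (ρ.actObj Z M₁)).hom) =
        ρ.actHom (α_ X Y Z).hom (𝟙 M₁) ≫
          ((𝒥.J X (Y ⊗ Z) M₁).inv ≫ (ρ.assocIso X (Y ⊗ Z) M₁).hom) ≫
          ρ.actHom (𝟙 X) ((𝒥.J Y Z M₁).inv ≫ (ρ.assocIso Y Z M₁).hom))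
    ∧ (∀ (X : C) (M₁ : M),
      ((𝒥.J X (𝟙_ C) M₁).inv ≫ (ρ.assocIso X (𝟙_ C) M₁).hom) ≫
          ρ.actHom (𝟙 X) (ρ.unitIso M₁).hom = ρ.actHom (ρ_ X).hom (𝟙 M₁)) := by
  constructor
  · intro X Y Z M₁
    set a := ρ.assocIso (X ⊗ Y) Z M₁ with ha
    set a' := ρ.assocIso X Y (ρ.actObj Z M₁) with ha'
    set b := ρ.assocIso X (Y ⊗ Z) M₁ with hb
    set αI := ρ.actIso (α_ X Y Z) (Iso.refl M₁) with hαI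
    set KI := ρ.actIso (Iso.refl X) (𝒥.J Y Z M₁) with hKI
    have cc : (a ≪≫ 𝒥.J X Y (ρ.actObj Z M₁) ≪≫ a.symm ≪≫ 𝒥.J (X ⊗ Y) Z M₁ ≪≫ αI)
        = (αI ≪≫ b ≪≫ KI ≪≫ b.symm ≪≫ 𝒥.J X (Y ⊗ Z) M₁) := by
      ext1
      simpa [ModCategory.actIso, hαI, hKI] using 𝒥.cocycle X Y Z M₁
    have cc' := congrArg Iso.inv cc
    simp only [Iso.trans_inv, Iso.symm_inv, Category.assoc] at cc'
    -- cc' : αI.inv ≫ (J XY Z).inv ≫ a.hom ≫ (J X Y _).inv ≫ a.inv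
    --     = (J X (Y⊗Z)).inv ≫ b.hom ≫ KI.inv ≫ b.inv ≫ αI.inv
    rw [Iso.inv_comp_eq] at cc'
    have split : ρ.actHom (𝟙 X) ((𝒥.J Y Z M₁).inv ≫ (ρ.assocIso Y Z M₁).hom)
        = ρ.actHom (𝟙 X) (𝒥.J Y Z M₁).inv ≫ ρ.actHom (𝟙 X) (ρ.assocIso Y Z M₁).hom := by
      have := ρ.actHom_comp (𝟙 X) (𝟙 X) (𝒥.J Y Z M₁).inv (ρ.assocIso Y Z M₁).hom
      simpa using this
    have hpent := ρ.pentagon X Y Z M₁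
    have hKIinv : KI.inv = ρ.actHom (𝟙 X) (𝒥.J Y Z M₁).inv := by
      simp [hKI, ModCategory.actIso]
    have hαIhom : αI.hom = ρ.actHom (α_ X Y Z).hom (𝟙 M₁) := by
      simp [hαI, ModCategory.actIso]
    rw [split, ← hKIinv, ← hαIhom]
    simp only [Category.assoc]
    calc (𝒥.J (X ⊗ Y) Z M₁).inv ≫ a.hom ≫ (𝒥.J X Y (ρ.actObj Z M₁)).inv ≫ a'.hom
        = ((𝒥.J (X ⊗ Y) Z M₁).inv ≫ a.hom ≫ (𝒥.J X Y (ρ.actObj Z M₁)).inv ≫ a.inv) ≫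
            (a.hom ≫ a'.hom) := by simp
      _ = ((𝒥.J (X ⊗ Y) Z M₁).inv ≫ a.hom ≫ (𝒥.J X Y (ρ.actObj Z M₁)).inv ≫ a.inv) ≫
            (ρ.actHom (α_ X Y Z).hom (𝟙 M₁) ≫ b.hom ≫
              ρ.actHom (𝟙 X) (ρ.assocIso Y Z M₁).hom) := by rw [hpent]
      _ = (αI.hom ≫ (𝒥.J X (Y ⊗ Z) M₁).inv ≫ b.hom ≫ KI.inv ≫ b.inv ≫ αI.inv) ≫
            (αI.hom ≫ b.hom ≫ ρ.actHom (𝟙 X) (ρ.assocIso Y Z M₁).hom) := by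
          rw [cc', hαIhom]
      _ = αI.hom ≫ (𝒥.J X (Y ⊗ Z) M₁).inv ≫ b.hom ≫ KI.inv ≫
            ρ.actHom (𝟙 X) (ρ.assocIso Y Z M₁).hom := by simp
  · intro X M₁
    have h := 𝒥.norm_right X M₁
    have htri := ρ.triangle X M₁
    rw [Category.assoc, htri, Iso.inv_comp_eq, h]
end
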